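/- Let V be a complex inner product space with two inner products ⟨·,·⟩₀ and ⟨·,·⟩_u, and let H be a subspace. Suppose x ∈ V satisfies ⟨x, h⟩₀ = 0 for all h ∈ H (x is ⟨·,·⟩₀-orthogonal to H). Write x = x₀ + v where x₀ ∈ H and ⟨v, h⟩_u = 0 for all h ∈ H (orthogonal decomposition with respect to ⟨·,·⟩_u). Then ⟨x₀, x₀⟩₀ ≤ ⟨v, v⟩₀. -/

import Mathlib

open scoped InnerProductSpace

/-- Lemma 3.1 in abstract form. Two inner products on the "same" space are
modeled by a linear equivalence `e : V ≃ₗ[ℂ] W` onto a second inner product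
space: `⟪·,·⟫₀` is the inner product of `V` and `⟪x,y⟫_u := ⟪e x, e y⟫`.
If `x` is `⟪·,·⟫₀`-orthogonal to a subspace `H`, and `x = x₀ + v` with
`x₀ ∈ H` and `v` `⟪·,·⟫_u`-orthogonal to `H`, then `⟨x₀,x₀⟩₀ ≤ ⟨v,v⟩₀`. -/
theorem stmt_1 {V W : Type*} [NormedAddCommGroup V] [InnerProductSpace ℂ V]
    [NormedAddCommGroup W] [InnerProductSpace ℂ W] (e : V ≃ₗ[ℂ] W)
    (H : Submodule ℂ V) (x x₀ v : V)
    (hx₀ : x₀ ∈ H) (hdec : x = x₀ + v)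
    (horth₀ : ∀ h ∈ H, ⟪x, h⟫_ℂ = 0)
    (horthu : ∀ h ∈ H, ⟪e v, e h⟫_ℂ = 0) :
    ‖x₀‖ ^ 2 ≤ ‖v‖ ^ 2 := by
  have key : ⟪x, x₀⟫_ℂ = 0 := horth₀ x₀ hx₀
  rw [hdec, inner_add_left] at key
  have h1 : (‖x₀‖ : ℝ) ^ 2 = ‖(⟪v, x₀⟫_ℂ)‖ := by
    have : ⟪x₀, x₀⟫_ℂ = -⟪v, x₀⟫_ℂ := by linear_combination key
    calc (‖x₀‖ : ℝ) ^ 2 = ‖(⟪x₀, x₀⟫_ℂ)‖ := by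
          rw [inner_self_eq_norm_sq_to_K (𝕜 := ℂ)]
          simp [sq_abs]
      _ = ‖(⟪v, x₀⟫_ℂ)‖ := by rw [this]; exact norm_neg _
  have h2 : ‖(⟪v, x₀⟫_ℂ)‖ ≤ ‖v‖ * ‖x₀‖ := by
    simpa using norm_inner_le_norm (𝕜 := ℂ) v x₀
  have hle : ‖x₀‖ ≤ ‖v‖ := by
    rcases eq_or_lt_of_le (norm_nonneg x₀) with h0 | h0
    · rw [← h0]; exact norm_nonneg v
    · nlinarith [h1, h2]
  nlinarith [norm_nonneg x₀, norm_nonneg v]
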